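/- Let $K$ be a complete discrete valuation field of mixed characteristic $(0,p)$ with absolute ramification index $e$, and let $\mathcal{G}$ be a finite flat group scheme over $\mathcal{O}_K$ killed by $p$. Then the lower ramification subgroup $\mathcal{G}_i$ vanishes for all rational $i > e/(p-1)$. -/

import Mathlib

open scoped TensorProduct

/-- Convolution product of two points of an affine group (bi)algebra `A` with values in a
commutative `O`-algebra `C`. -/
noncomputable def convMul (O A C : Type) [CommRing O] [CommRing A] [CommRing C]
    [Bialgebra O A] [Algebra O C] (f g : A →ₐ[O] C) : A →ₐ[O] C :=
  (Algebra.TensorProduct.productMap f g).comp (Bialgebra.comulAlgHom O A)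

/-- `n`-fold convolution power of a point; `convPow 0 f` is the unit (zero) point
given by the counit. -/
noncomputable def convPow (O A C : Type) [CommRing O] [CommRing A] [CommRing C]
    [Bialgebra O A] [Algebra O C] (n : ℕ) (f : A →ₐ[O] C) : A →ₐ[O] C :=
  n.rec ((Algebra.ofId O C).comp (Bialgebra.counitAlgHom O A))
    (fun _ ih => convMul O A C f ih)

section ConvLin
variable (O A C : Type) [CommRing O] [CommRing A] [CommRing C]
  [Bialgebra O A] [Algebra O C]

noncomputable def convL (g h : A →ₗ[O] C) : A →ₗ[O] C :=
  (LinearMap.mul' O C) ∘ₗ (TensorProduct.map g h) ∘ₗ (Coalgebra.comul)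

noncomputable def epsL : A →ₗ[O] C :=
  (Algebra.linearMap O C) ∘ₗ (Coalgebra.counit)

noncomputable def DL (f : A →ₐ[O] C) : ℕ → (A →ₗ[O] C)
  | 0 => epsL O A C
  | (k+1) => convL O A C (f.toLinearMap - epsL O A C) (DL f k)

variable {O A C}

theorem convL_apply (g h : A →ₗ[O] C) (x : A) :
    convL O A C g h x = LinearMap.mul' O C (TensorProduct.map g h (Coalgebra.comul x)) := rfl

theorem convL_add_left (g g' h : A →ₗ[O] C) :
    convL O A C (g + g') h = convL O A C g h + convL O A C g' h := by
  ext x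
  simp [convL_apply, TensorProduct.map_add_left, LinearMap.add_apply, map_add]

theorem convL_add_right (g h h' : A →ₗ[O] C) :
    convL O A C g (h + h') = convL O A C g h + convL O A C g h' := by
  ext x
  simp [convL_apply, TensorProduct.map_add_right, LinearMap.add_apply, map_add]

theorem convL_sum_right {ι : Type*} (g : A →ₗ[O] C) (s : Finset ι) (h : ι → A →ₗ[O] C) :
    convL O A C g (∑ j ∈ s, h j) = ∑ j ∈ s, convL O A C g (h j) := by
  classical
  induction s using Finset.induction_on with
  | empty =>
      ext x
      simp [convL_apply]
  | insert j s hj ih =>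
      rw [Finset.sum_insert hj, Finset.sum_insert hj, convL_add_right, ih]

theorem convL_nsmul_right (g h : A →ₗ[O] C) (n : ℕ) :
    convL O A C g (n • h) = n • convL O A C g h := by
  induction n with
  | zero =>
      ext x
      simp [convL_apply]
  | succ n ih =>
      rw [succ_nsmul, succ_nsmul, convL_add_right, ih]

theorem convL_epsL_right (g : A →ₗ[O] C) : convL O A C g (epsL O A C) = g := by
  ext x
  have h1 : TensorProduct.map g (epsL O A C)
      = (TensorProduct.map g (Algebra.linearMap O C)).comp
        ((Coalgebra.counit (R := O) (A := A)).lTensor A) := by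
    rw [LinearMap.map_comp_lTensor]
    rfl
  rw [convL_apply, h1, LinearMap.comp_apply, Coalgebra.lTensor_counit_comul]
  simp [LinearMap.mul'_apply]

theorem convL_epsL_left (g : A →ₗ[O] C) : convL O A C (epsL O A C) g = g := by
  ext x
  have h1 : TensorProduct.map (epsL O A C) g
      = (TensorProduct.map (Algebra.linearMap O C) g).comp
        ((Coalgebra.counit (R := O) (A := A)).rTensor A) := by
    rw [LinearMap.map_comp_rTensor]
    rfl
  rw [convL_apply, h1, LinearMap.comp_apply, Coalgebra.rTensor_counit_comul]
  simp [LinearMap.mul'_apply]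

theorem epsL_eq : epsL O A C
    = ((Algebra.ofId O C).comp (Bialgebra.counitAlgHom O A)).toLinearMap := by
  ext x
  rfl

theorem convMul_toLin (g h : A →ₐ[O] C) :
    (convMul O A C g h).toLinearMap = convL O A C g.toLinearMap h.toLinearMap := by
  ext x
  have key : ∀ z : A ⊗[O] A, Algebra.TensorProduct.productMap g h z
      = LinearMap.mul' O C (TensorProduct.map g.toLinearMap h.toLinearMap z) := by
    intro z
    induction z using TensorProduct.induction_on with
    | zero => simp
    | tmul a b => simp [Algebra.TensorProduct.productMap_apply_tmul, LinearMap.mul'_apply]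
    | add u w hu hw => simp [map_add, hu, hw]
  show convMul O A C g h x = _
  rw [convMul]
  simp only [AlgHom.comp_apply, Bialgebra.comulAlgHom_apply]
  exact key _

theorem convPow_toLin (f : A →ₐ[O] C) (n : ℕ) :
    (convPow O A C n f).toLinearMap
      = ∑ k ∈ Finset.range (n + 1), n.choose k • DL O A C f k := by
  induction n with
  | zero =>
      show ((Algebra.ofId O C).comp (Bialgebra.counitAlgHom O A)).toLinearMap = _
      rw [← epsL_eq]
      simp [DL]
  | succ n ih =>
      set δ : A →ₗ[O] C := f.toLinearMap - epsL O A C with hδ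
      have h1 : (convPow O A C (n + 1) f).toLinearMap
          = convL O A C f.toLinearMap (convPow O A C n f).toLinearMap := by
        show (convMul O A C f (convPow O A C n f)).toLinearMap = _
        rw [convMul_toLin]
      have hf : f.toLinearMap = epsL O A C + δ := by rw [hδ]; abel
      rw [h1, ih, hf, convL_add_left, convL_sum_right, convL_sum_right]
      have e1 : ∀ k, convL O A C (epsL O A C) (n.choose k • DL O A C f k)
          = n.choose k • DL O A C f k := fun k => convL_epsL_left _
      have e2 : ∀ k, convL O A C δ (n.choose k • DL O A C f k)
          = n.choose k • DL O A C f (k + 1) := by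
        intro k
        rw [convL_nsmul_right]
        rfl
      simp only [e1, e2]
      rw [Finset.sum_range_succ' (fun k => (n+1).choose k • DL O A C f k) (n+1)]
      have e3 : ∀ k, (n+1).choose (k+1) • DL O A C f (k+1)
          = n.choose k • DL O A C f (k+1) + n.choose (k+1) • DL O A C f (k+1) := by
        intro k
        rw [Nat.choose_succ_succ, add_smul]
      simp only [e3, Finset.sum_add_distrib, Nat.choose_zero_right, one_smul]
      have e4 : (∑ k ∈ Finset.range (n+1), n.choose (k+1) • DL O A C f (k+1))
            + DL O A C f 0
          = ∑ k ∈ Finset.range (n+1), n.choose k • DL O A C f k := by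
        have := Finset.sum_range_succ' (fun k => n.choose k • DL O A C f k) (n+1)
        rw [Finset.sum_range_succ (fun k => n.choose k • DL O A C f k) (n+1)] at this
        simp only [Nat.choose_succ_self, zero_smul, add_zero, Nat.choose_zero_right,
          one_smul] at this
        exact this.symm
      rw [← e4]
      abel

end ConvLin

theorem convL_val {O A R : Type} [CommRing O] [CommRing A] [CommRing R]
    [Bialgebra O A] [Algebra O R] (v : AddValuation R (WithTop ℚ))
    (g h : A →ₗ[O] R) (s s' : WithTop ℚ)
    (hg : ∀ x, s ≤ v (g x)) (hh : ∀ x, s' ≤ v (h x)) (x : A) :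
    s + s' ≤ v (convL O A R g h x) := by
  rw [convL_apply]
  have key : ∀ z : A ⊗[O] A, s + s' ≤ v (LinearMap.mul' O R (TensorProduct.map g h z)) := by
    intro z
    induction z using TensorProduct.induction_on with
    | zero => simp
    | tmul a b =>
        rw [TensorProduct.map_tmul, LinearMap.mul'_apply, v.map_mul]
        exact add_le_add (hg a) (hh b)
    | add u w hu hw =>
        rw [map_add, map_add]
        exact v.map_le_add hu hw
  exact key _

theorem nsmul_coe_one (n : ℕ) : n • (((1 : ℚ)) : WithTop ℚ) = ((n : ℚ) : WithTop ℚ) := by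
  induction n with
  | zero => simp
  | succ n ih =>
      rw [succ_nsmul, ih, ← WithTop.coe_add]
      norm_num

/-- For a finite flat group scheme `𝒢 = Spec B` killed by `p` over the ring of integers
`𝒪_K` of a complete discrete valuation field of mixed characteristic `(0,p)` with
absolute ramification index `e`, the lower ramification subgroup `𝒢_i` vanishes for
`i > e/(p-1)`: any point of `B` with values in `𝒪_{K̄}` reducing to the zero point
modulo `m^{≥i}` is the zero point. -/
theorem stmt8 (p e : ℕ) [Fact p.Prime] (he : 0 < e)
    (O : Type) [CommRing O] [IsDomain O] [IsDiscreteValuationRing O] [CharZero O]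
    (π : O) (hπ : Irreducible π)
    (hram : Ideal.span {(p : O)} = Ideal.span {π} ^ e)
    (B : Type) [CommRing B] [HopfAlgebra O B] [Module.Finite O B] [Module.Flat O B]
    (hkill : ∀ (C : Type) [CommRing C] [Algebra O C] (f : B →ₐ[O] C),
      convPow O B C p f = (Algebra.ofId O C).comp (Bialgebra.counitAlgHom O B))
    (Obar : Type) [CommRing Obar] [IsDomain Obar] [Algebra O Obar]
    [Algebra.IsIntegral O Obar]
    (Kbar : Type) [Field Kbar] [Algebra Obar Kbar] [IsFractionRing Obar Kbar]
    [IsAlgClosed Kbar]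
    (v : AddValuation Obar (WithTop ℚ))
    (hvπ : v (algebraMap O Obar π) = ((1 : ℚ) : WithTop ℚ))
    (hv0 : ∀ x : Obar, 0 ≤ v x)
    (hvtop : ∀ x : Obar, v x = ⊤ → x = 0)
    (i : ℚ) (hi : (e : ℚ) / ((p : ℚ) - 1) < i)
    (I : Ideal Obar) (hI : ∀ x : Obar, x ∈ I ↔ ((i : ℚ) : WithTop ℚ) ≤ v x)
    (f : B →ₐ[O] Obar)
    (hf : (Ideal.Quotient.mkₐ O I).comp f =
      (Ideal.Quotient.mkₐ O I).comp
        ((Algebra.ofId O Obar).comp (Bialgebra.counitAlgHom O B))) :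
    f = (Algebra.ofId O Obar).comp (Bialgebra.counitAlgHom O B) := by
  
  classical
  have hpp : p.Prime := Fact.out
  have hp2 : 2 ≤ p := hpp.two_le
  obtain ⟨m, rfl⟩ : ∃ m, p = m + 2 := ⟨p - 2, by omega⟩
  set δ : B →ₗ[O] Obar := f.toLinearMap - epsL O B Obar with hδdef
  set D : ℕ → (B →ₗ[O] Obar) := DL O B Obar f with hDdef
  -- rational arithmetic
  have hp1q : (1 : ℚ) < ((m + 2 : ℕ) : ℚ) := by push_cast; linarith [Nat.cast_nonneg (α := ℚ) m]
  have hpq1 : (0 : ℚ) < ((m + 2 : ℕ) : ℚ) - 1 := by linarith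
  have hie : (e : ℚ) < i * (((m + 2 : ℕ) : ℚ) - 1) := (div_lt_iff₀ hpq1).mp hi
  have hi0 : (0 : ℚ) < i :=
    lt_of_le_of_lt (div_nonneg (Nat.cast_nonneg e) (le_of_lt hpq1)) hi
  set c : ℚ := min i ((((m + 2 : ℕ) : ℚ) - 1) * i - (e : ℚ)) with hc
  have hc0 : 0 < c := lt_min hi0 (by nlinarith)
  have hci : c ≤ i := min_le_left _ _
  have hcpi : c ≤ (((m + 2 : ℕ) : ℚ) - 1) * i - (e : ℚ) := min_le_right _ _
  -- valuation of p
  have hπe : v (algebraMap O Obar (π ^ e)) = ((e : ℚ) : WithTop ℚ) := by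
    rw [map_pow, v.map_pow, hvπ, nsmul_coe_one]
  have hp_mem : ((m + 2 : ℕ) : O) ∈ Ideal.span {π ^ e} := by
    rw [← Ideal.span_singleton_pow, ← hram]
    exact Ideal.mem_span_singleton_self _
  obtain ⟨cO, hcO⟩ := Ideal.mem_span_singleton'.mp hp_mem
  have hπe_mem : π ^ e ∈ Ideal.span {((m + 2 : ℕ) : O)} := by
    rw [hram, Ideal.span_singleton_pow]
    exact Ideal.mem_span_singleton_self _
  obtain ⟨dO, hdO⟩ := Ideal.mem_span_singleton'.mp hπe_mem
  have vp_ge : ((e : ℚ) : WithTop ℚ) ≤ v (algebraMap O Obar ((m + 2 : ℕ) : O)) := by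
    rw [← hcO, map_mul, v.map_mul, hπe]
    calc ((e : ℚ) : WithTop ℚ) = 0 + ((e : ℚ) : WithTop ℚ) := (zero_add _).symm
    _ ≤ _ := add_le_add (hv0 _) le_rfl
  have vp_le : v (algebraMap O Obar ((m + 2 : ℕ) : O)) ≤ ((e : ℚ) : WithTop ℚ) := by
    rw [← hπe, ← hdO, map_mul, v.map_mul]
    exact le_add_of_nonneg_left (hv0 _)
  have vpObar : v (((m + 2 : ℕ) : Obar)) = ((e : ℚ) : WithTop ℚ) := by
    rw [← map_natCast (algebraMap O Obar) (m + 2)]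
    exact le_antisymm vp_le vp_ge
  -- the key linear identity : (m+2) • δ = - ∑_{k<m+1} choose(p,k+2) • D (k+2)
  have hkf := congrArg AlgHom.toLinearMap (hkill Obar f)
  rw [convPow_toLin, ← epsL_eq] at hkf
  have A1 := Finset.sum_range_succ' (fun k => (m + 2).choose k • D k) (m + 2)
  have A2 := Finset.sum_range_succ' (fun k => (m + 2).choose (k + 1) • D (k + 1)) (m + 1)
  simp only [show m + 1 + 1 = m + 2 from rfl] at A2
  rw [A1, A2] at hkf
  simp only [Nat.choose_zero_right, one_smul, zero_add, Nat.choose_one_right] at hkf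
  have hD0 : D 0 = epsL O B Obar := rfl
  have hD1 : D 1 = δ := by
    show convL O B Obar δ (epsL O B Obar) = δ
    exact convL_epsL_right δ
  rw [hD0, hD1] at hkf
  have hzero : (∑ k ∈ Finset.range (m + 1), (m + 2).choose (k + 1 + 1) • D (k + 1 + 1))
      + (m + 2) • δ = 0 := by
    have h0 : (∑ k ∈ Finset.range (m + 1), (m + 2).choose (k + 1 + 1) • D (k + 1 + 1))
        + (m + 2) • δ + epsL O B Obar = 0 + epsL O B Obar := by
      rw [zero_add]; exact hkf
    exact add_right_cancel h0
  have hSx : ∀ x : B, ((m + 2 : ℕ) : Obar) * δ x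
      = - ∑ k ∈ Finset.range (m + 1), (m + 2).choose (k + 1 + 1) • D (k + 1 + 1) x := by
    intro x
    have h1 := congrArg (fun (L : B →ₗ[O] Obar) => L x) hzero
    simp only [LinearMap.add_apply, LinearMap.zero_apply, LinearMap.sum_apply,
      LinearMap.smul_apply] at h1
    have h2 : ((m + 2 : ℕ) : Obar) * δ x = (m + 2) • δ x := (nsmul_eq_mul _ _).symm
    rw [h2]
    exact eq_neg_of_add_eq_zero_right h1
  -- bound for iterated convolutions
  have Dbound : ∀ t : ℚ, 0 ≤ t → (∀ x, ((t : ℚ) : WithTop ℚ) ≤ v (δ x)) →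
      ∀ (k : ℕ) (x : B), ((((k : ℚ) * t : ℚ)) : WithTop ℚ) ≤ v (D k x) := by
    intro t ht hδv k
    induction k with
    | zero =>
        intro x
        have : (((0 : ℚ) * t : ℚ) : WithTop ℚ) = 0 := by norm_num
        rw [show ((0 : ℕ) : ℚ) = (0 : ℚ) from rfl, this]
        exact hv0 _
    | succ k ih =>
        intro x
        have h := convL_val v δ (D k) ((t : ℚ) : WithTop ℚ) ((((k : ℚ) * t : ℚ)) : WithTop ℚ)
          hδv ih x
        have hcoe : ((t : ℚ) : WithTop ℚ) + ((((k : ℚ) * t : ℚ)) : WithTop ℚ)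
            = (((((k + 1 : ℕ) : ℚ)) * t : ℚ) : WithTop ℚ) := by
          rw [← WithTop.coe_add]
          exact congrArg (fun q : ℚ => (q : WithTop ℚ)) (by push_cast; ring)
        rw [hcoe] at h
        exact h
  -- the inductive step
  have step : ∀ t : ℚ, i ≤ t → (∀ x, ((t : ℚ) : WithTop ℚ) ≤ v (δ x)) →
      ∀ x, (((t + c : ℚ)) : WithTop ℚ) ≤ v (δ x) := by
    intro t hti hδv x
    have ht0 : 0 ≤ t := le_trans (le_of_lt hi0) hti
    have hDb := Dbound t ht0 hδv
    have hterm : ∀ k ∈ Finset.range (m + 1),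
        (((e : ℚ) + (t + c) : ℚ) : WithTop ℚ)
          ≤ v ((m + 2).choose (k + 1 + 1) • D (k + 1 + 1) x) := by
      intro k hk
      rw [Finset.mem_range] at hk
      rw [nsmul_eq_mul, v.map_mul]
      have hDk := hDb (k + 1 + 1) x
      by_cases hcase : k + 1 + 1 = m + 2
      · rw [hcase, Nat.choose_self, Nat.cast_one, v.map_one, zero_add]
        refine le_trans ?_ (hDb (m + 2) x)
        rw [WithTop.coe_le_coe]
        linarith [mul_le_mul_of_nonneg_left hti (le_of_lt hpq1), hcpi]
      · have hlt : k + 1 + 1 < m + 2 := by omega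
        obtain ⟨u, hu⟩ := hpp.dvd_choose_self (by omega) hlt
        rw [hu, Nat.cast_mul, v.map_mul, vpObar]
        have h1 : (((e : ℚ)) : WithTop ℚ) + v ((u : Obar)) + v (D (k + 1 + 1) x)
            ≥ (((e : ℚ)) : WithTop ℚ) + 0 + ((((k + 1 + 1 : ℕ) : ℚ) * t : ℚ) : WithTop ℚ) := by
          exact add_le_add (add_le_add le_rfl (hv0 _)) hDk
        refine le_trans ?_ h1
        rw [add_zero, ← WithTop.coe_add, WithTop.coe_le_coe]
        have h2k : (2 : ℚ) ≤ ((k + 1 + 1 : ℕ) : ℚ) := by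
          push_cast; linarith [Nat.cast_nonneg (α := ℚ) k]
        linarith [mul_le_mul_of_nonneg_right h2k ht0, hci, hti]
    have hSv : (((e : ℚ) + (t + c) : ℚ) : WithTop ℚ)
        ≤ v (∑ k ∈ Finset.range (m + 1), (m + 2).choose (k + 1 + 1) • D (k + 1 + 1) x) :=
      v.map_le_sum hterm
    have hkey : (((e : ℚ)) : WithTop ℚ) + v (δ x)
        ≥ (((e : ℚ)) : WithTop ℚ) + ((t + c : ℚ) : WithTop ℚ) := by
      have h3 : v (((m + 2 : ℕ) : Obar) * δ x)
          = (((e : ℚ)) : WithTop ℚ) + v (δ x) := by rw [v.map_mul, vpObar]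
      rw [← h3, hSx x, v.map_neg]
      refine le_trans ?_ hSv
      rw [← WithTop.coe_add]
    exact (WithTop.add_le_add_iff_left (WithTop.coe_ne_top (a := (e : ℚ)))).mp hkey
  -- initial bound
  have init : ∀ x : B, ((i : ℚ) : WithTop ℚ) ≤ v (δ x) := by
    intro x
    have h1 := congrArg (fun (g : B →ₐ[O] (Obar ⧸ I)) => g x) hf
    simp only [AlgHom.comp_apply, Ideal.Quotient.mkₐ_eq_mk] at h1
    have h2 : f x - ((Algebra.ofId O Obar).comp (Bialgebra.counitAlgHom O B)) x ∈ I :=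
      Ideal.Quotient.eq.mp h1
    have h3 : δ x = f x - ((Algebra.ofId O Obar).comp (Bialgebra.counitAlgHom O B)) x := rfl
    rw [h3]
    exact (hI _).mp h2
  -- iterate
  have main : ∀ n : ℕ, ∀ x : B, (((i + n * c : ℚ)) : WithTop ℚ) ≤ v (δ x) := by
    intro n
    induction n with
    | zero =>
        intro x
        have : ((i + (0 : ℕ) * c : ℚ)) = i := by push_cast; ring
        rw [this]
        exact init x
    | succ n ih =>
        intro x
        have hge : i ≤ i + n * c := by
          have : (0 : ℚ) ≤ (n : ℚ) * c := mul_nonneg (Nat.cast_nonneg n) (le_of_lt hc0)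
          linarith
        have := step (i + n * c) hge ih x
        have heq : ((i + n * c : ℚ)) + c = (i + ((n + 1 : ℕ) : ℚ) * c : ℚ) := by
          push_cast; ring
        rw [heq] at this
        exact this
  -- conclude δ = 0
  have hzero' : ∀ x : B, δ x = 0 := by
    intro x
    by_contra hx
    have hne : v (δ x) ≠ ⊤ := fun h => hx (hvtop _ h)
    obtain ⟨q, hq⟩ := WithTop.ne_top_iff_exists.mp hne
    obtain ⟨n, hn⟩ := exists_nat_gt ((q - i) / c)
    have h1 : q < i + n * c := by
      have := (div_lt_iff₀ hc0).mp hn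
      linarith
    have h2 := main n x
    rw [← hq, WithTop.coe_le_coe] at h2
    linarith
  ext x
  have := hzero' x
  have h4 : δ x = f x - ((Algebra.ofId O Obar).comp (Bialgebra.counitAlgHom O B)) x := rfl
  rw [h4, sub_eq_zero] at this
  exact this
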